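/- Let S be a unitary on H ⊕ L, Π the orthogonal projection onto L, and ξ ∈ H. If v, v' ∈ L both satisfy S(ξ ⊕ v) = τ ⊕ v and S(ξ ⊕ v') = τ' ⊕ v' for some τ, τ' ∈ H, and both v and v' are orthogonal to the 1-eigenspace of Π S Π restricted to L, then v = v' and τ = τ'. -/

import Mathlib

/-- **Transduction (uniqueness).** Let `S` be a unitary on `W = H ⊕ L` with `L = Hᗮ`, and
let `Π` be the orthogonal projection onto `L`. If `v, v' ∈ L` are catalysts for `ξ ∈ H`
(i.e. `S(ξ ⊕ v) = τ ⊕ v` and `S(ξ ⊕ v') = τ' ⊕ v'` with `τ, τ' ∈ H`), and both `v` and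
`v'` are orthogonal to the `1`-eigenspace of `Π S Π` restricted to `L`, then `v = v'`
and `τ = τ'`. -/
theorem transduction_unique
    {W : Type*} [NormedAddCommGroup W] [InnerProductSpace ℂ W] [FiniteDimensional ℂ W]
    (H : Submodule ℂ W) (S : W ≃ₗᵢ[ℂ] W)
    {ξ τ τ' v v' : W}
    (hξ : ξ ∈ H) (hτ : τ ∈ H) (hτ' : τ' ∈ H)
    (hv : v ∈ Hᗮ) (hv' : v' ∈ Hᗮ)
    (h1 : S (ξ + v) = τ + v) (h2 : S (ξ + v') = τ' + v')
    (horth : ∀ w ∈ Hᗮ, ((Hᗮ.orthogonalProjectionOnto (S w)) : W) = w → (inner ℂ v w : ℂ) = 0)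
    (horth' : ∀ w ∈ Hᗮ, ((Hᗮ.orthogonalProjectionOnto (S w)) : W) = w → (inner ℂ v' w : ℂ) = 0) :
    v = v' ∧ τ = τ' := by
  set w := v - v' with hw
  have hwm : w ∈ Hᗮ := Hᗮ.sub_mem hv hv'
  have hSw : S w = (τ - τ') + w := by
    have : S (ξ + v) - S (ξ + v') = (τ + v) - (τ' + v') := by rw [h1, h2]
    rw [← map_sub] at this
    simp only [add_sub_add_left_eq_sub] at this
    rw [hw]
    linear_combination (norm := abel) this
  have hproj : ((Hᗮ.orthogonalProjectionOnto (S w)) : W) = w := by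
    rw [hSw, map_add]
    have h0 : Hᗮ.orthogonalProjectionOnto (τ - τ') = 0 :=
      Submodule.orthogonalProjectionOnto_apply_of_mem_orthogonal
        (Submodule.le_orthogonal_orthogonal H (H.sub_mem hτ hτ'))
    have hs : ((Hᗮ.orthogonalProjectionOnto w : Hᗮ) : W) = w :=
      Submodule.starProjection_eq_self_iff.mpr hwm
    rw [h0]
    simpa using hs
  have e1 : (inner ℂ v w : ℂ) = 0 := horth w hwm hproj
  have e2 : (inner ℂ v' w : ℂ) = 0 := horth' w hwm hproj
  have : (inner ℂ w w : ℂ) = 0 := by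
    rw [hw, inner_sub_left, e1, e2, sub_zero]
  have hw0 : w = 0 := inner_self_eq_zero.mp this
  have hvv : v = v' := sub_eq_zero.mp hw0
  refine ⟨hvv, ?_⟩
  have := h1
  rw [hvv] at this
  rw [h2] at this
  exact (add_right_cancel this).symm
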